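/- For α ∈ (1,2), ε ∈ (0, 2−α), k ≥ 2, and t > 0, the double integral ∫₀ᵗ ∫_{ℝᵈ\{0}} min(1, |z|^{(α+ε)/2} (t−s)^{-1/2})^k |z|^{-d-α} dz ds is bounded by t^{ε/(α+ε)} · ∫_{ℝᵈ\{0}} min(1, |z'|^{(α+ε)k/2}) |z'|^{-d-α} dz' · (α+ε)/ε, via the change of variable z = (t−s)^{1/(α+ε)} z'; in particular it is finite. -/

import Mathlib

open MeasureTheory Set
open scoped ENNReal

section Aux
open Metric Module

lemma polar_lintegral {E : Type*} [NormedAddCommGroup E] [NormedSpace ℝ E]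
    [MeasurableSpace E] [BorelSpace E] [FiniteDimensional ℝ E] [Nontrivial E]
    (μ : Measure E) [μ.IsAddHaarMeasure] (g : ℝ → ℝ≥0∞) (hg : Measurable g) :
    ∫⁻ x, g ‖x‖ ∂μ = μ.toSphere univ *
      ∫⁻ y in Ioi (0:ℝ), ENNReal.ofReal (y ^ (finrank ℝ E - 1)) * g y := by
  have h0 : ({(0:E)}ᶜ : Set E) =ᵐ[μ] (univ : Set E) := by
    rw [ae_eq_univ]
    simp [measure_singleton]
  have hmeas : Measurable fun p : sphere (0:E) 1 × Ioi (0:ℝ) => g p.2.1 :=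
    hg.comp (measurable_subtype_coe.comp measurable_snd)
  calc ∫⁻ x, g ‖x‖ ∂μ = ∫⁻ x in ({(0:E)}ᶜ : Set E), g ‖x‖ ∂μ := by
        rw [setLIntegral_congr h0, setLIntegral_univ]
    _ = ∫⁻ x : ({(0:E)}ᶜ : Set E), g ‖x.1‖ ∂(μ.comap Subtype.val) :=
        (lintegral_subtype_comap (measurableSet_singleton 0).compl _).symm
    _ = ∫⁻ p : sphere (0:E) 1 × Ioi (0:ℝ), g p.2.1
          ∂(μ.toSphere.prod (.volumeIoiPow (finrank ℝ E - 1))) := by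
        rw [← (μ.measurePreserving_homeomorphUnitSphereProd).lintegral_comp hmeas]
        simp
    _ = μ.toSphere univ * ∫⁻ y : Ioi (0:ℝ), g y.1
          ∂(Measure.volumeIoiPow (finrank ℝ E - 1)) := by
        rw [lintegral_prod _ hmeas.aemeasurable]
        simp [lintegral_const, mul_comm]
    _ = μ.toSphere univ * ∫⁻ y in Ioi (0:ℝ),
          ENNReal.ofReal (y ^ (finrank ℝ E - 1)) * g y := by
        congr 1
        rw [Measure.volumeIoiPow,
          lintegral_withDensity_eq_lintegral_mul _
            ((measurable_subtype_coe.pow_const _).ennreal_ofReal)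
            (show Measurable fun y : Ioi (0:ℝ) => g y.1 from hg.comp measurable_subtype_coe),
          ← lintegral_subtype_comap measurableSet_Ioi
            (fun y : ℝ => ENNReal.ofReal (y ^ (finrank ℝ E - 1)) * g y)]
        rfl

lemma model_finite (d : ℕ) (hd : 1 ≤ d) (α q : ℝ) (hα : 0 < α) (hq : α < q) :
    (∫⁻ z : EuclideanSpace ℝ (Fin d),
      ENNReal.ofReal (min 1 (‖z‖ ^ q) * ‖z‖ ^ (-(d : ℝ) - α))) ≠ ∞ := by
  haveI : Nonempty (Fin d) := ⟨⟨0, hd⟩⟩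
  haveI : Nontrivial (EuclideanSpace ℝ (Fin d)) :=
    inferInstance
  have hg : Measurable fun y : ℝ => ENNReal.ofReal (min 1 (y ^ q) * y ^ (-(d : ℝ) - α)) := by
    fun_prop
  have key := polar_lintegral (volume : Measure (EuclideanSpace ℝ (Fin d)))
    (fun y => ENNReal.ofReal (min 1 (y ^ q) * y ^ (-(d : ℝ) - α))) hg
  rw [key, finrank_euclideanSpace_fin]
  refine ENNReal.mul_ne_top (measure_ne_top _ _) ?_
  have hsplit : Ioi (0:ℝ) = Ioc (0:ℝ) 1 ∪ Ioi (1:ℝ) := (Ioc_union_Ioi_eq_Ioi zero_le_one).symm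
  rw [hsplit, lintegral_union measurableSet_Ioi Ioc_disjoint_Ioi_same]
  have hcast : ((d - 1 : ℕ) : ℝ) = (d : ℝ) - 1 := by
    rw [Nat.cast_sub hd, Nat.cast_one]
  have hA : (∫⁻ y in Ioc (0:ℝ) 1,
      ENNReal.ofReal (y ^ (d - 1)) * ENNReal.ofReal (min 1 (y ^ q) * y ^ (-(d : ℝ) - α)))
      ≤ ∫⁻ y in Ioc (0:ℝ) 1, ENNReal.ofReal (y ^ (q - α - 1)) := by
    refine setLIntegral_mono (by fun_prop) fun y hy => ?_
    have hy0 : 0 < y := hy.1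
    have hmin : min 1 (y ^ q) = y ^ q :=
      min_eq_right (Real.rpow_le_one hy0.le hy.2 (by linarith))
    rw [hmin, ← ENNReal.ofReal_mul (by positivity)]
    apply ENNReal.ofReal_le_ofReal
    rw [← Real.rpow_natCast y (d - 1), hcast, ← Real.rpow_add hy0, ← Real.rpow_add hy0]
    apply le_of_eq
    congr 1
    ring
  have hB : (∫⁻ y in Ioi (1:ℝ),
      ENNReal.ofReal (y ^ (d - 1)) * ENNReal.ofReal (min 1 (y ^ q) * y ^ (-(d : ℝ) - α)))
      ≤ ∫⁻ y in Ioi (1:ℝ), ENNReal.ofReal (y ^ (-α - 1)) := by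
    refine setLIntegral_mono (by fun_prop) fun y hy => ?_
    have hy0 : (0:ℝ) < y := lt_trans one_pos hy
    rw [← ENNReal.ofReal_mul (by positivity)]
    apply ENNReal.ofReal_le_ofReal
    calc y ^ (d - 1) * (min 1 (y ^ q) * y ^ (-(d : ℝ) - α))
        ≤ y ^ (d - 1) * (1 * y ^ (-(d : ℝ) - α)) := by
          apply mul_le_mul_of_nonneg_left _ (by positivity)
          apply mul_le_mul_of_nonneg_right (min_le_left _ _) (by positivity)
      _ = y ^ (-α - 1) := by
          rw [one_mul, ← Real.rpow_natCast y (d - 1), hcast, ← Real.rpow_add hy0]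
          congr 1
          ring
  have hAfin : (∫⁻ y in Ioc (0:ℝ) 1, ENNReal.ofReal (y ^ (q - α - 1))) < ∞ := by
    have hint : IntegrableOn (fun y : ℝ => y ^ (q - α - 1)) (Ioc 0 1) := by
      have := intervalIntegral.intervalIntegrable_rpow' (a := 0) (b := 1)
        (show (-1:ℝ) < q - α - 1 by linarith)
      rwa [intervalIntegrable_iff_integrableOn_Ioc_of_le zero_le_one] at this
    exact hint.lintegral_lt_top
  have hBfin : (∫⁻ y in Ioi (1:ℝ), ENNReal.ofReal (y ^ (-α - 1))) < ∞ := by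
    have hint : IntegrableOn (fun y : ℝ => y ^ (-α - 1)) (Ioi 1) :=
      integrableOn_Ioi_rpow_of_lt (by linarith) one_pos
    exact hint.lintegral_lt_top
  exact ENNReal.add_ne_top.2 ⟨(hA.trans_lt hAfin).ne, (hB.trans_lt hBfin).ne⟩

lemma scaling_eq (d : ℕ) (α ε k u : ℝ) (hαε : 0 < α + ε) (hk0 : 0 ≤ k) (hu : 0 < u) :
    (∫⁻ z : EuclideanSpace ℝ (Fin d),
        ENNReal.ofReal ((min 1 (‖z‖ ^ ((α + ε) / 2) * u ^ (-(1:ℝ)/2))) ^ k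
          * ‖z‖ ^ (-(d : ℝ) - α)))
    = ENNReal.ofReal (u ^ (-(α / (α + ε)))) *
      ∫⁻ z : EuclideanSpace ℝ (Fin d),
        ENNReal.ofReal (min 1 (‖z‖ ^ ((α + ε) * k / 2)) * ‖z‖ ^ (-(d : ℝ) - α)) := by
  set c : ℝ := u ^ (α + ε)⁻¹ with hc
  have hc0 : 0 < c := Real.rpow_pos_of_pos hu _
  set G : EuclideanSpace ℝ (Fin d) → ℝ≥0∞ := fun z =>
    ENNReal.ofReal ((min 1 (‖z‖ ^ ((α + ε) / 2) * u ^ (-(1:ℝ)/2))) ^ k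
      * ‖z‖ ^ (-(d : ℝ) - α)) with hG
  have hGm : Measurable G := by
    apply Measurable.ennreal_ofReal
    fun_prop
  have hmp : ∀ x : ℝ, 0 ≤ x → (min 1 x) ^ k = min 1 (x ^ k) := by
    intro x hx
    rcases le_total x 1 with h | h
    · rw [min_eq_right h, min_eq_right (Real.rpow_le_one hx h hk0)]
    · rw [min_eq_left h, Real.one_rpow, min_eq_left]
      calc (1:ℝ) = 1 ^ k := (Real.one_rpow k).symm
        _ ≤ x ^ k := Real.rpow_le_rpow zero_le_one h hk0
  have hpt : ∀ z : EuclideanSpace ℝ (Fin d), G (c • z) =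
      ENNReal.ofReal (c ^ (-(d : ℝ) - α)) *
        ENNReal.ofReal (min 1 (‖z‖ ^ ((α + ε) * k / 2)) * ‖z‖ ^ (-(d : ℝ) - α)) := by
    intro z
    have hnorm : ‖c • z‖ = c * ‖z‖ := by
      rw [norm_smul, Real.norm_eq_abs, abs_of_pos hc0]
    have hcr : c ^ ((α + ε) / 2) = u ^ ((1:ℝ)/2) := by
      rw [hc, ← Real.rpow_mul hu.le]
      congr 1
      field_simp
    have harg : ‖c • z‖ ^ ((α + ε) / 2) * u ^ (-(1:ℝ)/2) = ‖z‖ ^ ((α + ε) / 2) := by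
      calc ‖c • z‖ ^ ((α + ε) / 2) * u ^ (-(1:ℝ)/2)
          = u ^ ((1:ℝ)/2) * ‖z‖ ^ ((α + ε) / 2) * u ^ (-(1:ℝ)/2) := by
            rw [hnorm, Real.mul_rpow hc0.le (norm_nonneg z), hcr]
        _ = ‖z‖ ^ ((α + ε) / 2) * (u ^ ((1:ℝ)/2) * u ^ (-(1:ℝ)/2)) := by ring
        _ = ‖z‖ ^ ((α + ε) / 2) := by
            rw [← Real.rpow_add hu]
            norm_num
    have h2 : (‖z‖ ^ ((α + ε) / 2)) ^ k = ‖z‖ ^ ((α + ε) * k / 2) := by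
      rw [← Real.rpow_mul (norm_nonneg z)]
      congr 1
      ring
    have hminpow : (min 1 (‖z‖ ^ ((α + ε) / 2))) ^ k
        = min 1 (‖z‖ ^ ((α + ε) * k / 2)) := by
      rw [hmp _ (Real.rpow_nonneg (norm_nonneg z) _), h2]
    have hnormpow : ‖c • z‖ ^ (-(d : ℝ) - α)
        = c ^ (-(d : ℝ) - α) * ‖z‖ ^ (-(d : ℝ) - α) := by
      rw [hnorm, Real.mul_rpow hc0.le (norm_nonneg z)]
    simp only [hG]
    rw [harg, hnormpow, hminpow, ← ENNReal.ofReal_mul (Real.rpow_nonneg hc0.le _)]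
    congr 1
    ring
  have h1 : (∫⁻ z, G (c • z)) = ENNReal.ofReal ((c ^ d)⁻¹) * ∫⁻ z, G z := by
    rw [← lintegral_map hGm (measurable_const_smul c),
      Measure.map_addHaar_smul volume hc0.ne', lintegral_smul_measure]
    congr 2
    rw [finrank_euclideanSpace_fin, abs_of_nonneg (by positivity)]
  have h2' : (∫⁻ z, G (c • z)) = ENNReal.ofReal (c ^ (-(d : ℝ) - α)) *
      ∫⁻ z : EuclideanSpace ℝ (Fin d),
        ENNReal.ofReal (min 1 (‖z‖ ^ ((α + ε) * k / 2)) * ‖z‖ ^ (-(d : ℝ) - α)) := by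
    simp only [hpt]
    rw [lintegral_const_mul' _ _ ENNReal.ofReal_ne_top]
  have hcancel : ENNReal.ofReal (c ^ d) * ENNReal.ofReal ((c ^ d)⁻¹) = 1 := by
    rw [← ENNReal.ofReal_mul (by positivity), mul_inv_cancel₀ (by positivity),
      ENNReal.ofReal_one]
  calc ∫⁻ z, G z = (ENNReal.ofReal (c ^ d) * ENNReal.ofReal ((c ^ d)⁻¹)) * ∫⁻ z, G z := by
        rw [hcancel, one_mul]
    _ = ENNReal.ofReal (c ^ d) * (∫⁻ z, G (c • z)) := by rw [mul_assoc, ← h1]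
    _ = ENNReal.ofReal (c ^ d) * (ENNReal.ofReal (c ^ (-(d : ℝ) - α)) *
          ∫⁻ z : EuclideanSpace ℝ (Fin d),
            ENNReal.ofReal (min 1 (‖z‖ ^ ((α + ε) * k / 2)) * ‖z‖ ^ (-(d : ℝ) - α))) := by
        rw [h2']
    _ = ENNReal.ofReal (u ^ (-(α / (α + ε)))) *
          ∫⁻ z : EuclideanSpace ℝ (Fin d),
            ENNReal.ofReal (min 1 (‖z‖ ^ ((α + ε) * k / 2)) * ‖z‖ ^ (-(d : ℝ) - α)) := by
        rw [← mul_assoc, ← ENNReal.ofReal_mul (by positivity)]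
        congr 2
        rw [← Real.rpow_natCast c d, ← Real.rpow_add hc0, hc, ← Real.rpow_mul hu.le]
        congr 1
        field_simp
        ring

lemma time_integral (α ε t : ℝ) (hα : 0 < α) (hε : 0 < ε) (ht : 0 < t) :
    (∫⁻ s in Ioo (0:ℝ) t, ENNReal.ofReal ((t - s) ^ (-(α / (α + ε)))))
      = ENNReal.ofReal (t ^ (ε / (α + ε)) * ((α + ε) / ε)) := by
  have hαε : 0 < α + ε := by linarith
  set p : ℝ := α / (α + ε) with hp
  have hplt : p < 1 := (div_lt_one hαε).2 (by linarith)
  have hppos : 0 < p := div_pos hα hαε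
  have hp1 : (-1:ℝ) < -p := by linarith
  have hint : IntegrableOn (fun s : ℝ => (t - s) ^ (-p)) (Ioo 0 t) := by
    have h0 : IntervalIntegrable (fun x : ℝ => x ^ (-p)) volume 0 t :=
      intervalIntegral.intervalIntegrable_rpow' hp1
    have h1 := (h0.comp_sub_left t)
    rw [sub_zero, sub_self] at h1
    have h2 := h1.symm
    rwa [intervalIntegrable_iff_integrableOn_Ioo_of_le ht.le] at h2
  rw [← ofReal_integral_eq_lintegral_ofReal hint
    ((ae_restrict_iff' measurableSet_Ioo).2 (ae_of_all _ fun s hs =>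
      Real.rpow_nonneg (by linarith [hs.2] : (0:ℝ) ≤ t - s) _))]
  congr 1
  have hIoo : ∫ s in Ioo (0:ℝ) t, (t - s) ^ (-p) = ∫ s in (0:ℝ)..t, (t - s) ^ (-p) := by
    rw [intervalIntegral.integral_of_le ht.le, integral_Ioc_eq_integral_Ioo]
  rw [hIoo, intervalIntegral.integral_comp_sub_left (fun x : ℝ => x ^ (-p)) t,
    sub_zero, sub_self, integral_rpow (Or.inl hp1),
    Real.zero_rpow (by linarith : -p + 1 ≠ 0)]
  have he : -p + 1 = ε / (α + ε) := by
    rw [hp]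
    field_simp
    ring
  rw [he, sub_zero]
  rw [div_div_eq_mul_div, mul_div_assoc]

end Aux

/-- For `α ∈ (1,2)`, `ε ∈ (0,2−α)`, `k ≥ 2`, `t > 0`, the double integral
`∫₀ᵗ ∫_{ℝᵈ\{0}} min(1, |z|^{(α+ε)/2}(t−s)^{-1/2})^k |z|^{-d-α} dz ds` is bounded by
`t^{ε/(α+ε)} (α+ε)/ε · ∫ min(1, |z'|^{(α+ε)k/2}) |z'|^{-d-α} dz'`, and in particular
it is finite. -/
theorem stmt_13 (d : ℕ) (hd : 1 ≤ d) (α ε k t : ℝ)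
    (hα : 1 < α) (hα2 : α < 2) (hε : 0 < ε) (hε2 : ε < 2 - α)
    (hk : 2 ≤ k) (ht : 0 < t) :
    (∫⁻ s in Ioo (0:ℝ) t, ∫⁻ z in {(0 : EuclideanSpace ℝ (Fin d))}ᶜ,
        ENNReal.ofReal
          ((min 1 (‖z‖ ^ ((α + ε) / 2) * (t - s) ^ (-(1:ℝ)/2))) ^ k
            * ‖z‖ ^ (-(d : ℝ) - α)))
      ≤ ENNReal.ofReal (t ^ (ε / (α + ε)) * ((α + ε) / ε))
        * ∫⁻ z' in {(0 : EuclideanSpace ℝ (Fin d))}ᶜ,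
            ENNReal.ofReal (min 1 (‖z'‖ ^ ((α + ε) * k / 2)) * ‖z'‖ ^ (-(d : ℝ) - α)) ∧
    (∫⁻ s in Ioo (0:ℝ) t, ∫⁻ z in {(0 : EuclideanSpace ℝ (Fin d))}ᶜ,
        ENNReal.ofReal
          ((min 1 (‖z‖ ^ ((α + ε) / 2) * (t - s) ^ (-(1:ℝ)/2))) ^ k
            * ‖z‖ ^ (-(d : ℝ) - α))) ≠ ∞ := by
  haveI : Nonempty (Fin d) := ⟨⟨0, hd⟩⟩
  haveI : Nontrivial (EuclideanSpace ℝ (Fin d)) :=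
    inferInstance
  have hαε : 0 < α + ε := by linarith
  have hk0 : (0:ℝ) ≤ k := by linarith
  have h0 : ({(0 : EuclideanSpace ℝ (Fin d))}ᶜ : Set _) =ᵐ[volume] univ := by
    rw [ae_eq_univ]
    simp [measure_singleton]
  have hsetI : ∀ f : EuclideanSpace ℝ (Fin d) → ℝ≥0∞,
      (∫⁻ z in {(0 : EuclideanSpace ℝ (Fin d))}ᶜ, f z) = ∫⁻ z, f z := fun f => by
    rw [setLIntegral_congr h0, setLIntegral_univ]
  set I : ℝ≥0∞ := ∫⁻ z : EuclideanSpace ℝ (Fin d),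
    ENNReal.ofReal (min 1 (‖z‖ ^ ((α + ε) * k / 2)) * ‖z‖ ^ (-(d : ℝ) - α)) with hIdef
  have hIne : I ≠ ∞ := by
    refine model_finite d hd α ((α + ε) * k / 2) (by linarith) ?_
    nlinarith [mul_le_mul_of_nonneg_left hk hαε.le]
  have hinner : ∀ s ∈ Ioo (0:ℝ) t,
      (∫⁻ z in {(0 : EuclideanSpace ℝ (Fin d))}ᶜ,
        ENNReal.ofReal
          ((min 1 (‖z‖ ^ ((α + ε) / 2) * (t - s) ^ (-(1:ℝ)/2))) ^ k
            * ‖z‖ ^ (-(d : ℝ) - α)))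
      = ENNReal.ofReal ((t - s) ^ (-(α / (α + ε)))) * I := by
    intro s hs
    rw [hsetI]
    exact scaling_eq d α ε k (t - s) hαε hk0 (by linarith [hs.2])
  have hmain : (∫⁻ s in Ioo (0:ℝ) t, ∫⁻ z in {(0 : EuclideanSpace ℝ (Fin d))}ᶜ,
        ENNReal.ofReal
          ((min 1 (‖z‖ ^ ((α + ε) / 2) * (t - s) ^ (-(1:ℝ)/2))) ^ k
            * ‖z‖ ^ (-(d : ℝ) - α)))
      = ENNReal.ofReal (t ^ (ε / (α + ε)) * ((α + ε) / ε)) * I := by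
    rw [setLIntegral_congr_fun measurableSet_Ioo hinner,
      lintegral_mul_const' I _ hIne,
      time_integral α ε t (by linarith) hε ht]
  constructor
  · rw [hmain, hsetI]
  · rw [hmain]
    exact ENNReal.mul_ne_top ENNReal.ofReal_ne_top hIne
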